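/- Let G be a finite simple graph with N vertices, let R ≥ 1 be a natural number and γ > 0 a real. Suppose that (i) every vertex subset U with R ≤ #U ≤ N/2 satisfies #(Γ_G(U) ∖ U) ≥ γ·#U, and (ii) every connected component of G contains more than R vertices. Then G is a min(γ, 1/R)-magnifier: every nonempty vertex subset U with #U ≤ N/2 satisfies #(Γ_G(U) ∖ U) ≥ min(γ, 1/R)·#U. -/
import Mathlib


/-- The neighbourhood `Γ_G(U)` of a vertex set `U`. -/
def nbhd {W : Type*} (G : SimpleGraph W) (U : Set W) : Set W :=
  {w | ∃ u ∈ U, G.Adj u w}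

/-- If `G` is an `(R,γ)`-pseudo-magnifier all of whose connected components have more
than `R` vertices, then `G` is a `min(γ, 1/R)`-magnifier. -/
theorem pseudo_magnifier_is_magnifier
    {W : Type} [Fintype W] (G : SimpleGraph W) (R : ℕ) (hR : 1 ≤ R)
    (γ : ℝ) (hγ : 0 < γ)
    (h1 : ∀ U : Set W, R ≤ U.ncard → (U.ncard : ℝ) ≤ (Fintype.card W : ℝ) / 2 →
      γ * (U.ncard : ℝ) ≤ (((nbhd G U) \ U).ncard : ℝ))
    (h2 : ∀ c : G.ConnectedComponent, R < c.supp.ncard) :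
    ∀ U : Set W, U.Nonempty → (U.ncard : ℝ) ≤ (Fintype.card W : ℝ) / 2 →
      min γ (1 / (R : ℝ)) * (U.ncard : ℝ) ≤ (((nbhd G U) \ U).ncard : ℝ) := by
  intro U hUne hU2
  by_cases hbig : R ≤ U.ncard
  · calc min γ (1 / (R : ℝ)) * (U.ncard : ℝ) ≤ γ * (U.ncard : ℝ) := by
          apply mul_le_mul_of_nonneg_right (min_le_left _ _) (by positivity)
    _ ≤ _ := h1 U hbig hU2
  · push_neg at hbig
    have hRpos : (0 : ℝ) < R := by exact_mod_cast hR
    -- boundary is nonempty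
    have hne : ((nbhd G U) \ U).Nonempty := by
      by_contra h
      rw [Set.not_nonempty_iff_eq_empty] at h
      have hcl : ∀ a ∈ U, ∀ b, G.Adj a b → b ∈ U := by
        intro a ha b hab
        by_contra hb
        have : b ∈ (nbhd G U) \ U := ⟨⟨a, ha, hab⟩, hb⟩
        simp [h] at this
      obtain ⟨u, hu⟩ := hUne
      have hsub : (G.connectedComponentMk u).supp ⊆ U := by
        intro w hw
        rw [SimpleGraph.ConnectedComponent.mem_supp_iff] at hw
        have hreach : G.Reachable u w :=
          (SimpleGraph.ConnectedComponent.eq.mp hw.symm)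
        obtain ⟨p⟩ := hreach
        clear hw
        induction p with
        | nil => exact hu
        | cons hadj p ih => exact ih (hcl _ hu _ hadj)
      have h3 := h2 (G.connectedComponentMk u)
      have h4 := Set.ncard_le_ncard hsub U.toFinite
      omega
    have h1le : 1 ≤ (((nbhd G U) \ U).ncard : ℝ) := by
      have : 0 < ((nbhd G U) \ U).ncard :=
        Set.ncard_pos (Set.toFinite _) |>.mpr hne
      exact_mod_cast this
    calc min γ (1 / (R : ℝ)) * (U.ncard : ℝ)
        ≤ (1 / (R : ℝ)) * (U.ncard : ℝ) := by
          apply mul_le_mul_of_nonneg_right (min_le_right _ _) (by positivity)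
      _ ≤ (1 / (R : ℝ)) * (R : ℝ) := by
          apply mul_le_mul_of_nonneg_left _ (by positivity)
          exact_mod_cast hbig.le
      _ = 1 := by field_simp
      _ ≤ _ := h1le
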